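/- Each of the 6 edges of the closed polygonal chain with vertices (−(1+√13)/6, −(1+√13)/6, 0), ((7+√13)/6, (7+√13)/6, 0), (−(1+√13)/4, 1/2, (3+√13)/4), ((7+√13)/6, −(1+√13)/6, 0), (−(1+√13)/6, (7+√13)/6, 0), ((5+√13)/4, 1/2, (3+√13)/4), returning to the start, has Euclidean length exactly √2·(4+√13)/3. -/

import Mathlib

noncomputable def pt3 (a b c : ℝ) : EuclideanSpace ℝ (Fin 3) := WithLp.toLp 2 ![a, b, c]

/-- The vertices of the smart covering cycle `F_{2,2,2}` (last vertex = first). -/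
noncomputable def F222 : Fin 7 → EuclideanSpace ℝ (Fin 3) :=
  ![pt3 (-(1 + Real.sqrt 13) / 6) (-(1 + Real.sqrt 13) / 6) 0,
    pt3 ((7 + Real.sqrt 13) / 6) ((7 + Real.sqrt 13) / 6) 0,
    pt3 (-(1 + Real.sqrt 13) / 4) (1 / 2) ((3 + Real.sqrt 13) / 4),
    pt3 ((7 + Real.sqrt 13) / 6) (-(1 + Real.sqrt 13) / 6) 0,
    pt3 (-(1 + Real.sqrt 13) / 6) ((7 + Real.sqrt 13) / 6) 0,
    pt3 ((5 + Real.sqrt 13) / 4) (1 / 2) ((3 + Real.sqrt 13) / 4),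
    pt3 (-(1 + Real.sqrt 13) / 6) (-(1 + Real.sqrt 13) / 6) 0]

lemma pt3_dist (a b c a' b' c' : ℝ)
    (h : (a - a') ^ 2 + (b - b') ^ 2 + (c - c') ^ 2
        = 2 * ((4 + Real.sqrt 13) / 3) ^ 2) :
    dist (pt3 a b c) (pt3 a' b' c') = Real.sqrt 2 * (4 + Real.sqrt 13) / 3 := by
  have h0 : (0:ℝ) ≤ (4 + Real.sqrt 13) / 3 := by positivity
  rw [EuclideanSpace.dist_eq]
  simp only [pt3, Fin.sum_univ_three, Matrix.cons_val_zero, Matrix.cons_val_one,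
    Matrix.head_cons, Matrix.cons_val_two, Matrix.tail_cons, Real.dist_eq, sq_abs]
  rw [h, Real.sqrt_mul (by norm_num : (0:ℝ) ≤ 2), Real.sqrt_sq h0]
  ring

/-- Each of the 6 edges of the closed chain `F_{2,2,2}` has Euclidean length exactly
`√2·(4+√13)/3`. -/
theorem stmt18 :
    ∀ i : Fin 6, dist (F222 i.castSucc) (F222 i.succ)
      = Real.sqrt 2 * (4 + Real.sqrt 13) / 3 := by
  have hs : Real.sqrt 13 ^ 2 = 13 := Real.sq_sqrt (by norm_num)
  intro i
  fin_cases i <;>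
    simp only [F222, Fin.castSucc, Fin.castAdd, Fin.castLE, Fin.succ, Fin.isValue, Matrix.cons_val_zero,
      Matrix.cons_val_one, Matrix.head_cons, Matrix.cons_val_two, Matrix.tail_cons,
      Matrix.cons_val_three, Matrix.cons_val_four, Matrix.cons_val_fin_one,
      Matrix.cons_val', Matrix.cons_val_succ] <;>
    apply pt3_dist <;>
    first
    | linear_combination (1/24 : ℝ) * hs
    | linear_combination (0 : ℝ) * hs
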